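/- PBTD(𝓗₁⁰) = 1, and for every d ≥ 2, PBTD(𝓗_d⁰) = 2, where 𝓗_d⁰ is the class of homogeneous halfspaces of ℝ^d. -/

import Mathlib

namespace PBT

variable {X : Type*}

/-- A set `L ⊆ X` is consistent with a set `T` of labeled examples
(label `true` = “+”, label `false` = “−”). -/
def Consistent (L : Set X) (T : Set (X × Bool)) : Prop :=
  ∀ p ∈ T, (p.2 = true → p.1 ∈ L) ∧ (p.2 = false → p.1 ∉ L)

/-- `T` is a teaching set for `L` w.r.t. the concept class `𝓛`:
`L` is the only concept in `𝓛` that is consistent with `T`. -/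
def IsTeachingSet (𝓛 : Set (Set X)) (L : Set X) (T : Set (X × Bool)) : Prop :=
  Consistent L T ∧ ∀ L' ∈ 𝓛, Consistent L' T → L' = L

/-- `TD L 𝓛`: least size of a finite teaching set for `L` w.r.t. `𝓛` (`⊤` if none exists). -/
noncomputable def TD (L : Set X) (𝓛 : Set (Set X)) : ℕ∞ :=
  sInf {n : ℕ∞ | ∃ T : Finset (X × Bool), IsTeachingSet 𝓛 L ↑T ∧ n = T.card}

/-- A positive teaching set, identified with its set of (positively labeled) points. -/
def IsPosTeachingSet (𝓛 : Set (Set X)) (L : Set X) (S : Set X) : Prop :=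
  S ⊆ L ∧ ∀ L' ∈ 𝓛, S ⊆ L' → L' = L

/-- least size of a finite positive teaching set for `L` w.r.t. `𝓛` (`⊤` if none exists). -/
noncomputable def TDpos (L : Set X) (𝓛 : Set (Set X)) : ℕ∞ :=
  sInf {n : ℕ∞ | ∃ S : Finset X, IsPosTeachingSet 𝓛 L ↑S ∧ n = S.card}

/-- A strict partial order (preference relation) on concepts:
`pr L' L` means `L` is strictly preferred over `L'`. -/
def StrictPO (pr : Set X → Set X → Prop) : Prop :=
  (∀ A, ¬ pr A A) ∧ ∀ A B C : Set X, pr A B → pr B C → pr A C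

/-- `PBTDord 𝓛 pr = sup_{L ∈ 𝓛} TD(L, 𝓛 \ {L' ∈ 𝓛 | pr L' L})`. -/
noncomputable def PBTDord (𝓛 : Set (Set X)) (pr : Set X → Set X → Prop) : ℕ∞ :=
  ⨆ L ∈ 𝓛, TD L {L' ∈ 𝓛 | ¬ pr L' L}

/-- preference-based teaching dimension of `𝓛`. -/
noncomputable def PBTD (𝓛 : Set (Set X)) : ℕ∞ :=
  sInf {v : ℕ∞ | ∃ pr, StrictPO pr ∧ v = PBTDord 𝓛 pr}

/-- `PBTDposOrd 𝓛 pr = sup_{L ∈ 𝓛} TD⁺(L, 𝓛 \ {L' ∈ 𝓛 | pr L' L})`. -/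
noncomputable def PBTDposOrd (𝓛 : Set (Set X)) (pr : Set X → Set X → Prop) : ℕ∞ :=
  ⨆ L ∈ 𝓛, TDpos L {L' ∈ 𝓛 | ¬ pr L' L}

/-- positive preference-based teaching dimension of `𝓛`. -/
noncomputable def PBTDpos (𝓛 : Set (Set X)) : ℕ∞ :=
  sInf {v : ℕ∞ | ∃ pr, StrictPO pr ∧ v = PBTDposOrd 𝓛 pr}


/-- The class `𝓗_d⁰` of homogeneous halfspaces of `ℝ^d`. -/
def homHalfspaces (d : ℕ) : Set (Set (EuclideanSpace ℝ (Fin d))) :=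
  {H | ∃ w : EuclideanSpace ℝ (Fin d), w ≠ 0 ∧ H = {x | (0:ℝ) ≤ inner ℝ w x}}

/-! ### generic lemmas -/

lemma TD_le_card {L : Set X} {C : Set (Set X)} (T : Finset (X × Bool))
    (h : IsTeachingSet C L ↑T) : TD L C ≤ T.card :=
  sInf_le ⟨T, h, rfl⟩

lemma exists_teaching_of_TD_le {L : Set X} {C : Set (Set X)} {n : ℕ} (h : TD L C ≤ n) :
    ∃ T : Finset (X × Bool), IsTeachingSet C L ↑T ∧ T.card ≤ n := by
  by_contra hc
  push_neg at hc
  have h2 : ((n : ℕ∞) + 1) ≤ TD L C := by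
    apply le_sInf
    rintro m ⟨T, hT, rfl⟩
    have := hc T hT
    exact_mod_cast Nat.succ_le_of_lt this
  have h3 := h2.trans h
  rw [show ((n:ℕ∞) + 1) = ((n+1 : ℕ) : ℕ∞) by push_cast; ring] at h3
  have : n + 1 ≤ n := by exact_mod_cast h3
  omega

lemma PBTD_le_ord {𝓛 : Set (Set X)} {pr} (h : StrictPO pr) : PBTD 𝓛 ≤ PBTDord 𝓛 pr :=
  sInf_le ⟨pr, h, rfl⟩

lemma StrictPO.asymm {pr : Set X → Set X → Prop} (h : StrictPO pr) {A B : Set X} :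
    pr A B → pr B A → False :=
  fun h1 h2 => h.1 A (h.2 A B A h1 h2)

lemma chain_contra {α : Type*} (pr : α → α → Prop) (irr : ∀ a, ¬ pr a a)
    (tr : ∀ a b c, pr a b → pr b c → pr a c)
    (H : ℕ → α) (h8 : H 8 = H 0)
    (h0 : pr (H 1) (H 0))
    (hP : ∀ m, m ≤ 6 → (pr (H (m+2)) (H (m+1)) ∨ pr (H m) (H (m+1)))) : False := by
  have S : ∀ m, m ≤ 7 → pr (H (m+1)) (H m) := by
    intro m
    induction m with
    | zero => intro _; exact h0
    | succ k ih =>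
      intro hk
      rcases hP k (by omega) with h | h
      · exact h
      · exact absurd (tr _ _ _ h (ih (by omega))) (irr _)
  have R : ∀ m, m ≤ 7 → pr (H (m+1)) (H 0) := by
    intro m
    induction m with
    | zero => intro _; exact S 0 (by omega)
    | succ k ih => intro hk; exact tr _ _ _ (S (k+1) (by omega)) (ih (by omega))
  have := R 7 (by omega)
  rw [show (7+1 : ℕ) = 8 from rfl, h8] at this
  exact irr _ this

/-- From a periodic chain with a step in one direction or the other at every index,
derive a contradiction with a strict partial order. -/
lemma no_cycle {α : Type*} (pr : α → α → Prop) (irr : ∀ a, ¬ pr a a)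
    (tr : ∀ a b c, pr a b → pr b c → pr a c)
    (H : ℕ → α) (hper : ∀ n, H (n + 8) = H n)
    (hP : ∀ m, pr (H (m+2)) (H (m+1)) ∨ pr (H m) (H (m+1))) : False := by
  have hmul : ∀ k n, H (n + 8*k) = H n := by
    intro k
    induction k with
    | zero => intro n; simp
    | succ j ih =>
      intro n
      have : n + 8*(j+1) = (n + 8*j) + 8 := by ring
      rw [this, hper, ih]
  rcases hP 55 with h | h
  · -- pr (H 57) (H 56), i.e. pr (H 1) (H 0)
    refine chain_contra pr irr tr H (by simpa using hmul 1 0) ?_ ?_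
    · have h' : pr (H 57) (H 56) := h
      have e1 : H 57 = H 1 := by
        rw [show (57:ℕ) = 1 + 8*7 by norm_num, hmul]
      have e2 : H 56 = H 0 := by
        rw [show (56:ℕ) = 0 + 8*7 by norm_num, hmul]
      rwa [e1, e2] at h'
    · intro m hm
      exact hP m
  · -- pr (H 55) (H 56) : go around the other way with G m := H (56 - m)
    refine chain_contra pr irr tr (fun m => H (56 - m)) ?_ ?_ ?_
    · show H (56 - 8) = H (56 - 0)
      have e1 : (56:ℕ) - 8 = 48 := by norm_num
      have e2 : (56:ℕ) - 0 = 48 + 8 := by norm_num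
      rw [e1, e2, hper 48]
    · show pr (H (56 - 1)) (H (56 - 0))
      have e1 : (56:ℕ) - 1 = 55 := by norm_num
      have e2 : (56:ℕ) - 0 = 55 + 1 := by norm_num
      rw [e1, e2]
      exact h
    · intro m hm
      have e1 : 56 - (m+1) = (54 - m) + 1 := by omega
      have e2 : 56 - (m+2) = 54 - m := by omega
      have e3 : 56 - m = (54 - m) + 2 := by omega
      show pr (H (56 - (m+2))) (H (56 - (m+1))) ∨ pr (H (56 - m)) (H (56 - (m+1)))
      rw [e1, e2, e3]
      exact (hP (54 - m)).symm


/-! ### halfspaces -/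

variable {d : ℕ}

def Hs (w : EuclideanSpace ℝ (Fin d)) : Set (EuclideanSpace ℝ (Fin d)) :=
  {x | (0:ℝ) ≤ inner ℝ w x}

lemma mem_Hs {w x : EuclideanSpace ℝ (Fin d)} : x ∈ Hs w ↔ (0:ℝ) ≤ inner ℝ w x := Iff.rfl

lemma Hs_mem_class {w : EuclideanSpace ℝ (Fin d)} (hw : w ≠ 0) : Hs w ∈ homHalfspaces d :=
  ⟨w, hw, rfl⟩

lemma Hs_smul {w : EuclideanSpace ℝ (Fin d)} {c : ℝ} (hc : 0 < c) : Hs (c • w) = Hs w := by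
  ext x
  simp only [mem_Hs, real_inner_smul_left]
  exact mul_nonneg_iff_of_pos_left hc

lemma inner_self_unit {u : EuclideanSpace ℝ (Fin d)} (hu : ‖u‖ = 1) :
    (inner ℝ u u : ℝ) = 1 := by
  rw [real_inner_self_eq_norm_sq, hu]; norm_num

lemma Hs_inj {u v : EuclideanSpace ℝ (Fin d)} (hu : ‖u‖ = 1) (hv : ‖v‖ = 1)
    (h : Hs u = Hs v) : u = v := by
  set t : ℝ := inner ℝ u v with ht
  have hvv : (inner ℝ v v : ℝ) = 1 := inner_self_unit hv
  have h1 : (1:ℝ) ≤ t := by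
    by_contra hlt
    push_neg at hlt
    have h0 : (0:ℝ) ≤ t := by
      have : v ∈ Hs v := by rw [mem_Hs, hvv]; norm_num
      rw [← h] at this
      exact this
    set s : ℝ := (t+1)/2 with hs
    have hts : t < s := by rw [hs]; linarith
    have hs1 : s ≤ 1 := by rw [hs]; linarith
    have hs0 : 0 ≤ s := by rw [hs]; linarith
    have hx : v - s • u ∈ Hs v := by
      rw [mem_Hs, inner_sub_right, real_inner_smul_right, hvv]
      have : s * (inner ℝ v u : ℝ) = s * t := by rw [real_inner_comm]
      rw [this]
      nlinarith
    rw [← h, mem_Hs, inner_sub_right, real_inner_smul_right, inner_self_unit hu] at hx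
    rw [← ht] at hx
    linarith
  have hnormsq : ‖u - v‖^2 = 0 := by
    rw [norm_sub_sq_real, hu, hv, ← ht]
    have h2 : t ≤ 1 := by
      calc t ≤ ‖u‖ * ‖v‖ := real_inner_le_norm u v
      _ = 1 := by rw [hu, hv]; norm_num
    nlinarith
  have : u - v = 0 := by
    rw [← norm_eq_zero]
    nlinarith [norm_nonneg (u - v)]
  exact sub_eq_zero.mp this

lemma exists_unit {L : Set (EuclideanSpace ℝ (Fin d))} (hL : L ∈ homHalfspaces d) :
    ∃ u : EuclideanSpace ℝ (Fin d), ‖u‖ = 1 ∧ L = Hs u := by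
  obtain ⟨w, hw, rfl⟩ := hL
  have hnorm : (0:ℝ) < ‖w‖ := norm_pos_iff.mpr hw
  refine ⟨‖w‖⁻¹ • w, ?_, ?_⟩
  · rw [norm_smul]
    simp [abs_of_pos (inv_pos.mpr hnorm), inv_mul_cancel₀ (ne_of_gt hnorm)]
  · exact (Hs_smul (inv_pos.mpr hnorm)).symm

lemma unit_ne_zero {u : EuclideanSpace ℝ (Fin d)} (hu : ‖u‖ = 1) : u ≠ 0 := by
  intro h
  rw [h, norm_zero] at hu
  norm_num at hu

lemma eq_of_inner_one {u v : EuclideanSpace ℝ (Fin d)} (hu : ‖u‖ = 1) (hv : ‖v‖ = 1)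
    (h : (inner ℝ v u : ℝ) = 1) : v = u := by
  have hnormsq : ‖v - u‖^2 = 0 := by
    rw [norm_sub_sq_real, hu, hv, h]; norm_num
  have : v - u = 0 := by
    rw [← norm_eq_zero]
    nlinarith [norm_nonneg (v - u)]
  exact sub_eq_zero.mp this


/-! ### the preference relation for the upper bound -/

/-- index of the first nonzero coordinate -/
noncomputable def kn (u : EuclideanSpace ℝ (Fin d)) : ℕ :=
  sInf {m | ∃ i : Fin d, (i:ℕ) = m ∧ u i ≠ 0}

lemma kn_spec {u : EuclideanSpace ℝ (Fin d)} (hu : u ≠ 0) :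
    ∃ i : Fin d, (i:ℕ) = kn u ∧ u i ≠ 0 := by
  have hne : {m | ∃ i : Fin d, (i:ℕ) = m ∧ u i ≠ 0}.Nonempty := by
    obtain ⟨i, hi⟩ : ∃ i, u i ≠ 0 := by
      by_contra hno
      push_neg at hno
      exact hu (PiLp.ext (fun i => by simp [hno i]))
    exact ⟨i, i, rfl, by simpa using hi⟩
  exact Nat.sInf_mem hne

lemma kn_le {u : EuclideanSpace ℝ (Fin d)} {i : Fin d} (h : u i ≠ 0) : kn u ≤ i :=
  Nat.sInf_le ⟨i, rfl, h⟩

/-- absolute value of the first nonzero coordinate -/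
noncomputable def gv (u : EuclideanSpace ℝ (Fin d)) : ℝ :=
  ∑ i : Fin d, if (i:ℕ) = kn u then |u i| else 0

lemma gv_eq {u : EuclideanSpace ℝ (Fin d)} {i : Fin d} (h : (i:ℕ) = kn u) :
    gv u = |u i| := by
  rw [gv]
  have : ∀ j : Fin d, (if (j:ℕ) = kn u then |u j| else 0) = (if j = i then |u j| else 0) := by
    intro j
    congr 1
    simp only [eq_iff_iff]
    constructor
    · intro hj; exact Fin.ext (by rw [hj, ← h])
    · intro hj; rw [hj, h]
  rw [Finset.sum_congr rfl (fun j _ => this j), Finset.sum_ite_eq' Finset.univ i (fun j => |u j|)]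
  simp

open Classical in
/-- canonical unit normal vector of a halfspace (junk value otherwise) -/
noncomputable def uvec (A : Set (EuclideanSpace ℝ (Fin d))) : EuclideanSpace ℝ (Fin d) :=
  if h : ∃ u, ‖u‖ = 1 ∧ A = Hs u then h.choose else 0

lemma uvec_spec (A : Set (EuclideanSpace ℝ (Fin d))) (h : ∃ u, ‖u‖ = 1 ∧ A = Hs u) :
    ‖uvec A‖ = 1 ∧ A = Hs (uvec A) := by
  classical
  rw [uvec, dif_pos h]
  exact h.choose_spec

lemma uvec_Hs {v : EuclideanSpace ℝ (Fin d)} (hv : ‖v‖ = 1) : uvec (Hs v) = v := by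
  obtain ⟨h1, h2⟩ := uvec_spec (Hs v) ⟨v, hv, rfl⟩
  exact Hs_inj h1 hv h2.symm

/-- the preference relation: prefer a later first-nonzero coordinate, then a larger
absolute value of that coordinate -/
noncomputable def prH (d : ℕ) : Set (EuclideanSpace ℝ (Fin d)) → Set (EuclideanSpace ℝ (Fin d)) → Prop :=
  fun A B => toLex (kn (uvec A), gv (uvec A)) < toLex (kn (uvec B), gv (uvec B))

lemma prH_strictPO (d : ℕ) : StrictPO (prH d) :=
  ⟨fun _ => lt_irrefl _, fun _ _ _ h1 h2 => lt_trans h1 h2⟩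

/-- Main upper-bound lemma : every homogeneous halfspace has a teaching set of size ≤ 2
w.r.t. the concepts not less preferred than it. -/
lemma TD_le_two_of_prH {L : Set (EuclideanSpace ℝ (Fin d))} (hL : L ∈ homHalfspaces d) :
    TD L {L' ∈ homHalfspaces d | ¬ prH d L' L} ≤ 2 := by
  classical
  obtain ⟨u, hu, rfl⟩ := exists_unit hL
  obtain ⟨i0, hi0, hc⟩ := kn_spec (unit_ne_zero hu)
  set c : ℝ := u i0 with hcdef
  have hc2 : (0:ℝ) < c^2 := (sq_nonneg c).lt_of_ne (Ne.symm (pow_ne_zero 2 hc))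
  set q : EuclideanSpace ℝ (Fin d) := EuclideanSpace.single i0 (1:ℝ) with hq
  set p : EuclideanSpace ℝ (Fin d) := q - c • u with hp
  set x : EuclideanSpace ℝ (Fin d) := (-c) • p with hx
  set y : EuclideanSpace ℝ (Fin d) := -u - (2/c) • p with hy
  have hup : (inner ℝ u p : ℝ) = 0 := by
    rw [hp, inner_sub_right, real_inner_smul_right, inner_self_unit hu, hq,
      EuclideanSpace.inner_single_right]
    simp [hcdef]
  have hux : (inner ℝ u x : ℝ) = 0 := by
    rw [hx, real_inner_smul_right, hup, mul_zero]
  have huy : (inner ℝ u y : ℝ) = -1 := by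
    rw [hy, inner_sub_right, inner_neg_right, real_inner_smul_right, hup,
      inner_self_unit hu]
    ring
  set T : Finset (EuclideanSpace ℝ (Fin d) × Bool) := {(x, true), (y, false)} with hT
  have hTcoe : (↑T : Set (EuclideanSpace ℝ (Fin d) × Bool)) = {(x, true), (y, false)} := by
    simp [hT]
  have hteach : IsTeachingSet {L' ∈ homHalfspaces d | ¬ prH d L' (Hs u)} (Hs u) ↑T := by
    constructor
    · -- consistency
      intro pe hpe
      rw [hTcoe] at hpe
      rcases hpe with hpe | hpe
      · subst hpe
        constructor
        · intro _
          show (0:ℝ) ≤ inner ℝ u x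
          rw [hux]
        · intro hcon
          simp at hcon
      · subst hpe
        constructor
        · intro hcon
          simp at hcon
        · intro _
          show ¬ ((0:ℝ) ≤ inner ℝ u y)
          rw [huy]
          norm_num
    · -- uniqueness
      rintro L' ⟨hL'mem, hnpr⟩ hcons
      obtain ⟨v, hv, rfl⟩ := exists_unit hL'mem
      have hxcon : x ∈ Hs v := (hcons (x, true) (by rw [hTcoe]; left; rfl)).1 rfl
      have hycon : y ∉ Hs v := (hcons (y, false) (by rw [hTcoe]; right; rfl)).2 rfl
      rw [mem_Hs] at hxcon
      rw [mem_Hs] at hycon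
      push_neg at hycon
      set a : ℝ := inner ℝ v u with ha
      set b : ℝ := inner ℝ v p with hb
      have hvx : (inner ℝ v x : ℝ) = -c * b := by
        rw [hx, real_inner_smul_right, hb]
      have hvy : (inner ℝ v y : ℝ) = -a - (2/c) * b := by
        rw [hy, inner_sub_right, inner_neg_right, real_inner_smul_right, ← ha, ← hb]
        try ring
      have hcb : c * b ≤ 0 := by rw [hvx] at hxcon; linarith
      have hab : 0 < a + (2/c) * b := by rw [hvy] at hycon; linarith
      have ha1 : a ≤ 1 := by
        calc a ≤ ‖v‖ * ‖u‖ := real_inner_le_norm v u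
        _ = 1 := by rw [hu, hv]; norm_num
      have hvi0 : v i0 = b + c * a := by
        have hqv : (inner ℝ v q : ℝ) = v i0 := by
          rw [hq, EuclideanSpace.inner_single_right]; simp
        have hqp : q = p + c • u := by rw [hp]; abel
        rw [← hqv, hqp, inner_add_right, real_inner_smul_right, ← ha, ← hb]
      -- key inequalities
      have hkey : c^2 * (a + 2/c * b) = c^2 * a + 2*(c*b) := by
        field_simp
      have hpos : 0 < c * (v i0) := by
        rw [hvi0]
        have h1 : 0 < c^2 * (a + 2/c*b) := mul_pos hc2 hab
        rw [hkey] at h1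
        have : c * (b + c * a) = c*b + c^2*a := by ring
        rw [this]
        linarith
      have hupper : c * (v i0) ≤ c^2 := by
        rw [hvi0]
        have h1 : c^2 * a ≤ c^2 := by nlinarith
        have : c * (b + c * a) = c*b + c^2*a := by ring
        rw [this]
        linarith
      -- competitor classification
      have hvu : uvec (Hs v) = v := uvec_Hs hv
      have huu : uvec (Hs u) = u := uvec_Hs hu
      rw [prH, hvu, huu, not_lt, Prod.Lex.le_iff] at hnpr
      rcases hnpr with hlt | ⟨heq, hge⟩
      · -- kn u < kn v : then v i0 = 0, contradiction
        exfalso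
        simp only [ofLex_toLex] at hlt
        have : v i0 = 0 := by
          by_contra hne
          have := kn_le hne
          omega
        rw [this, mul_zero] at hpos
        exact lt_irrefl 0 hpos
      · -- kn u = kn v and gv u ≤ gv v
        simp only [ofLex_toLex] at heq hge
        have hgu : gv u = |c| := gv_eq hi0
        have hgv : gv v = |v i0| := gv_eq (by rw [hi0, heq])
        rw [hgu, hgv] at hge
        -- |c| ≤ |v i0|, but c * v i0 ≤ c^2 and 0 < c * v i0 force |v i0| ≤ |c|
        have habs : |c| * |v i0| = c * (v i0) := by
          rw [← abs_mul]
          exact abs_of_pos hpos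
        have hcabs : (0:ℝ) < |c| := abs_pos.mpr hc
        have hvle : |v i0| ≤ |c| := by
          have h2 : |c| * |c| = c^2 := by rw [abs_mul_abs_self]; ring
          have h3 : |c| * |v i0| ≤ |c| * |c| := by rw [habs, h2]; exact hupper
          exact le_of_mul_le_mul_left h3 hcabs
        have hveq : |v i0| = |c| := le_antisymm hvle hge
        have hcv : c * (v i0) = c^2 := by
          have h1 : |c * v i0| = c^2 := by
            rw [abs_mul, hveq, ← sq_abs, sq]
          rw [abs_of_pos hpos] at h1
          exact h1
        -- equality analysis : a = 1
        have haeq : a = 1 := by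
          rw [hvi0] at hcv
          have hexp : c * (b + c*a) = c*b + c^2*a := by ring
          rw [hexp] at hcv
          have hr : c^2*(1-a) = c^2 - c^2*a := by ring
          have h6 : 0 ≤ c^2*(1-a) := mul_nonneg hc2.le (by linarith)
          have h7 : c^2*(1-a) = 0 := by linarith
          rcases mul_eq_zero.mp h7 with h8 | h8
          · exact absurd h8 (ne_of_gt hc2)
          · linarith
        exact congrArg Hs (eq_of_inner_one hu hv (by rw [← ha, haeq]))
  calc TD (Hs u) {L' ∈ homHalfspaces d | ¬ prH d L' (Hs u)} ≤ (T.card : ℕ∞) :=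
        TD_le_card T hteach
    _ ≤ 2 := by
        have : T.card ≤ 2 := by
          apply le_trans (Finset.card_insert_le _ _)
          simp
        exact_mod_cast this


/-! ### the circle configuration for the lower bound -/

open Real in
noncomputable def pt (d : ℕ) (hd : 2 ≤ d) (n : ℕ) : EuclideanSpace ℝ (Fin d) :=
  Real.cos (n * (Real.pi/4)) • EuclideanSpace.single ⟨0, by omega⟩ (1:ℝ) +
  Real.sin (n * (Real.pi/4)) • EuclideanSpace.single ⟨1, by omega⟩ (1:ℝ)

lemma inner_pt {d : ℕ} (hd : 2 ≤ d) (n m : ℕ) :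
    (inner ℝ (pt d hd n) (pt d hd m) : ℝ)
      = Real.cos ((n:ℝ)*(Real.pi/4) - (m:ℝ)*(Real.pi/4)) := by
  rw [Real.cos_sub]
  simp only [pt, inner_add_left, inner_add_right, real_inner_smul_left, real_inner_smul_right,
    EuclideanSpace.inner_single_left, EuclideanSpace.inner_single_right,
    EuclideanSpace.single_apply, starRingEnd_apply, star_trivial]
  norm_num [Fin.mk.injEq]
  ring

lemma pt_norm {d : ℕ} (hd : 2 ≤ d) (n : ℕ) : ‖pt d hd n‖ = 1 := by
  have h := inner_pt hd n n
  rw [sub_self, Real.cos_zero, real_inner_self_eq_norm_sq] at h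
  have := pow_left_inj₀ (norm_nonneg (pt d hd n)) zero_le_one (show 2 ≠ 0 by norm_num)
  rw [one_pow] at this
  exact this.mp h

lemma pt_sum {d : ℕ} (hd : 2 ≤ d) (n : ℕ) :
    pt d hd n + pt d hd (n+2) = Real.sqrt 2 • pt d hd (n+1) := by
  have hc : Real.cos ((n:ℝ)*(Real.pi/4)) + Real.cos (((n:ℝ)+2)*(Real.pi/4))
      = Real.sqrt 2 * Real.cos (((n:ℝ)+1)*(Real.pi/4)) := by
    have e1 : (n:ℝ)*(Real.pi/4) = ((n:ℝ)+1)*(Real.pi/4) - Real.pi/4 := by ring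
    have e2 : ((n:ℝ)+2)*(Real.pi/4) = ((n:ℝ)+1)*(Real.pi/4) + Real.pi/4 := by ring
    rw [e1, e2, Real.cos_sub, Real.cos_add, Real.cos_pi_div_four, Real.sin_pi_div_four]
    ring
  have hs : Real.sin ((n:ℝ)*(Real.pi/4)) + Real.sin (((n:ℝ)+2)*(Real.pi/4))
      = Real.sqrt 2 * Real.sin (((n:ℝ)+1)*(Real.pi/4)) := by
    have e1 : (n:ℝ)*(Real.pi/4) = ((n:ℝ)+1)*(Real.pi/4) - Real.pi/4 := by ring
    have e2 : ((n:ℝ)+2)*(Real.pi/4) = ((n:ℝ)+1)*(Real.pi/4) + Real.pi/4 := by ring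
    rw [e1, e2, Real.sin_sub, Real.sin_add, Real.cos_pi_div_four, Real.sin_pi_div_four]
    ring
  unfold pt
  push_cast
  rw [smul_add, smul_smul, smul_smul, ← hc, ← hs, add_smul, add_smul]
  abel

lemma pt_per {d : ℕ} (hd : 2 ≤ d) (n : ℕ) : pt d hd (n+8) = pt d hd n := by
  unfold pt
  have e : ((n+8:ℕ):ℝ) * (Real.pi/4) = (n:ℝ)*(Real.pi/4) + 2*Real.pi := by push_cast; ring
  rw [e, Real.cos_add_two_pi, Real.sin_add_two_pi]

lemma sqrt_two_lt_two : Real.sqrt 2 < 2 := by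
  nlinarith [Real.sq_sqrt (show (0:ℝ) ≤ 2 by norm_num), Real.sqrt_nonneg 2]

lemma pt_ne {d : ℕ} (hd : 2 ≤ d) (n : ℕ) : pt d hd n ≠ pt d hd (n+1) := by
  intro h
  have h1 := inner_pt hd n (n+1)
  rw [h] at h1
  have h2 := inner_pt hd (n+1) (n+1)
  rw [sub_self, Real.cos_zero] at h2
  rw [h2] at h1
  have e : (n:ℝ)*(Real.pi/4) - ((n+1:ℕ):ℝ)*(Real.pi/4) = -(Real.pi/4) := by push_cast; ring
  rw [e, Real.cos_neg, Real.cos_pi_div_four] at h1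
  nlinarith [sqrt_two_lt_two]

/-! ### the lower bound for `d ≥ 2` -/

lemma two_le_PBTDord {d : ℕ} (hd : 2 ≤ d) (pr : Set (EuclideanSpace ℝ (Fin d)) → Set (EuclideanSpace ℝ (Fin d)) → Prop)
    (spo : StrictPO pr) : 2 ≤ PBTDord (homHalfspaces d) pr := by
  by_contra hcon
  push_neg at hcon
  have hle1 : PBTDord (homHalfspaces d) pr ≤ 1 := by
    rw [show (2:ℕ∞) = 1 + 1 by norm_num] at hcon
    exact (ENat.lt_add_one_iff (by norm_num)).mp hcon
  set u : ℕ → EuclideanSpace ℝ (Fin d) := pt d hd with hu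
  set H : ℕ → Set (EuclideanSpace ℝ (Fin d)) := fun n => Hs (u n) with hH
  have hHclass : ∀ n, H n ∈ homHalfspaces d := fun n => Hs_mem_class (unit_ne_zero (pt_norm hd n))
  have hTD : ∀ n, TD (H n) {L' ∈ homHalfspaces d | ¬ pr L' (H n)} ≤ 1 := by
    intro n
    unfold PBTDord at hle1
    exact le_trans
      (le_iSup₂ (f := fun L (_ : L ∈ homHalfspaces d) => TD L {L' ∈ homHalfspaces d | ¬ pr L' L})
        (H n) (hHclass n)) hle1
  have hstep : ∀ n : ℕ, pr (H (n+2)) (H (n+1)) ∨ pr (H n) (H (n+1)) := by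
    intro n
    obtain ⟨T, hteach, hcard⟩ := exists_teaching_of_TD_le (hTD (n+1))
    have hj : Consistent (H (n+2)) ↑T ∨ Consistent (H n) ↑T := by
      rcases Finset.eq_empty_or_nonempty T with rfl | hne
      · left; intro p hp; simp at hp
      · have hcard1 : T.card = 1 := le_antisymm hcard (Finset.card_pos.mpr hne)
        obtain ⟨pa, hpa⟩ := Finset.card_eq_one.mp hcard1
        subst hpa
        obtain ⟨z, bb⟩ := pa
        have hsum : (inner ℝ (u n) z : ℝ) + inner ℝ (u (n+2)) z
            = Real.sqrt 2 * inner ℝ (u (n+1)) z := by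
          rw [← inner_add_left, hu, pt_sum hd n, real_inner_smul_left]
        have hcons1 := hteach.1 (z, bb) (by simp)
        cases bb with
        | true =>
          have hz : (0:ℝ) ≤ inner ℝ (u (n+1)) z := hcons1.1 rfl
          have hor : (0:ℝ) ≤ inner ℝ (u (n+2)) z ∨ (0:ℝ) ≤ inner ℝ (u n) z := by
            by_contra hno
            push_neg at hno
            have h2 : (0:ℝ) ≤ Real.sqrt 2 * inner ℝ (u (n+1)) z :=
              mul_nonneg (Real.sqrt_nonneg 2) hz
            nlinarith [hno.1, hno.2]
          rcases hor with h | h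
          · left; intro p hp; simp only [Finset.coe_singleton, Set.mem_singleton_iff] at hp
            subst hp
            exact ⟨fun _ => h, fun hcc => by simp at hcc⟩
          · right; intro p hp; simp only [Finset.coe_singleton, Set.mem_singleton_iff] at hp
            subst hp
            exact ⟨fun _ => h, fun hcc => by simp at hcc⟩
        | false =>
          have hz : z ∉ H (n+1) := hcons1.2 rfl
          rw [hH, mem_Hs] at hz
          push_neg at hz
          have hor : (inner ℝ (u (n+2)) z : ℝ) < 0 ∨ (inner ℝ (u n) z : ℝ) < 0 := by
            by_contra hno
            push_neg at hno
            have h2 : Real.sqrt 2 * (inner ℝ (u (n+1)) z : ℝ) < 0 :=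
              mul_neg_of_pos_of_neg (Real.sqrt_pos.mpr (by norm_num)) hz
            nlinarith [hno.1, hno.2]
          rcases hor with h | h
          · left; intro p hp; simp only [Finset.coe_singleton, Set.mem_singleton_iff] at hp
            subst hp
            exact ⟨fun hcc => by simp at hcc, fun _ => by rw [hH, mem_Hs]; push_neg; exact h⟩
          · right; intro p hp; simp only [Finset.coe_singleton, Set.mem_singleton_iff] at hp
            subst hp
            exact ⟨fun hcc => by simp at hcc, fun _ => by rw [hH, mem_Hs]; push_neg; exact h⟩
    have hne1 : u (n+2) ≠ u (n+1) := fun h => pt_ne hd (n+1) h.symm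
    have hne2 : u n ≠ u (n+1) := pt_ne hd n
    rcases hj with h | h
    · left
      by_contra hnpr
      have := hteach.2 (H (n+2)) ⟨hHclass (n+2), hnpr⟩ h
      exact hne1 (Hs_inj (pt_norm hd (n+2)) (pt_norm hd (n+1)) this)
    · right
      by_contra hnpr
      have := hteach.2 (H n) ⟨hHclass n, hnpr⟩ h
      exact hne2 (Hs_inj (pt_norm hd n) (pt_norm hd (n+1)) this)
  have hper : ∀ n, H (n+8) = H n := fun n => congrArg Hs (pt_per hd n)
  exact no_cycle pr spo.1 (fun a b c => spo.2 a b c) H hper hstep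


/-! ### the upper bound for general `d` -/

lemma ord_le_two {d : ℕ} : PBTDord (homHalfspaces d) (prH d) ≤ 2 := by
  unfold PBTDord
  exact iSup₂_le fun L hL => TD_le_two_of_prH hL

/-! ### dimension one -/

lemma fin1_ne_zero {w : EuclideanSpace ℝ (Fin 1)} (hw : w ≠ 0) : w 0 ≠ 0 := by
  intro h
  apply hw
  ext i
  rw [Subsingleton.elim i 0]
  exact h

lemma inner_fin1 (w x : EuclideanSpace ℝ (Fin 1)) : (inner ℝ w x : ℝ) = w 0 * x 0 := by
  simp [PiLp.inner_apply, RCLike.inner_apply, conj_trivial, Fin.sum_univ_one]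
  ring

lemma ord_one_le_one : PBTDord (homHalfspaces 1) (fun _ _ => False) ≤ 1 := by
  unfold PBTDord
  apply iSup₂_le
  rintro L hL
  obtain ⟨w, hw, rfl⟩ := hL
  classical
  set T : Finset (EuclideanSpace ℝ (Fin 1) × Bool) := {(w, true)} with hT
  have hteach : IsTeachingSet {L' ∈ homHalfspaces 1 | ¬ False} (Hs w) ↑T := by
    constructor
    · intro p hp
      simp only [hT, Finset.coe_singleton, Set.mem_singleton_iff] at hp
      subst hp
      exact ⟨fun _ => real_inner_self_nonneg, fun hcc => by simp at hcc⟩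
    · rintro L' ⟨hL'mem, -⟩ hcons
      obtain ⟨w', hw', rfl⟩ := hL'mem
      have hx : w ∈ Hs w' := (hcons (w, true) (by simp [hT])).1 rfl
      rw [mem_Hs, inner_fin1] at hx
      have hww : w 0 ≠ 0 := fin1_ne_zero hw
      have hww' : w' 0 ≠ 0 := fin1_ne_zero hw'
      have hpos : 0 < w' 0 * w 0 := lt_of_le_of_ne hx (Ne.symm (mul_ne_zero hww' hww))
      ext x
      simp only [Hs, Set.mem_setOf_eq, inner_fin1]
      rcases mul_pos_iff.mp hpos with ⟨ha, hb⟩ | ⟨ha, hb⟩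
      · rw [mul_nonneg_iff_of_pos_left ha, mul_nonneg_iff_of_pos_left hb]
      · constructor <;> intro h <;> nlinarith
  calc TD (Hs w) {L' ∈ homHalfspaces 1 | ¬ False} ≤ (T.card : ℕ∞) := TD_le_card T hteach
  _ ≤ 1 := by simp [hT]

lemma one_le_ord_one (pr : Set (EuclideanSpace ℝ (Fin 1)) → Set (EuclideanSpace ℝ (Fin 1)) → Prop)
    (spo : StrictPO pr) : 1 ≤ PBTDord (homHalfspaces 1) pr := by
  by_contra hcon
  push_neg at hcon
  have hle0 : PBTDord (homHalfspaces 1) pr ≤ 0 := by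
    rw [show (1:ℕ∞) = 0 + 1 by norm_num] at hcon
    exact (ENat.lt_add_one_iff (by norm_num)).mp hcon
  set e1 : EuclideanSpace ℝ (Fin 1) := EuclideanSpace.single 0 1 with he1def
  have he1 : ‖e1‖ = 1 := by rw [he1def, EuclideanSpace.norm_single]; norm_num
  have he1' : ‖-e1‖ = 1 := by rw [norm_neg]; exact he1
  have hne : Hs e1 ≠ Hs (-e1) := by
    intro heq
    have h1 : e1 ∈ Hs e1 := mem_Hs.mpr real_inner_self_nonneg
    have h2 : e1 ∉ Hs (-e1) := by
      rw [mem_Hs, inner_neg_left, inner_self_unit he1]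
      norm_num
    exact h2 (heq ▸ h1)
  have key : ∀ L L' : Set (EuclideanSpace ℝ (Fin 1)),
      L ∈ homHalfspaces 1 → L' ∈ homHalfspaces 1 → L' ≠ L → pr L' L := by
    intro L L' hL hL' hne'
    have hTD : TD L {A ∈ homHalfspaces 1 | ¬ pr A L} ≤ (0:ℕ) := by
      unfold PBTDord at hle0
      exact le_trans
        (le_iSup₂ (f := fun A (_ : A ∈ homHalfspaces 1) => TD A {B ∈ homHalfspaces 1 | ¬ pr B A})
          L hL) hle0
    obtain ⟨T, hteach, hcard⟩ := exists_teaching_of_TD_le hTD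
    have hTempty : T = ∅ := Finset.card_eq_zero.mp (le_antisymm hcard (Nat.zero_le _))
    subst hTempty
    by_contra hnpr
    exact hne' (hteach.2 L' ⟨hL', hnpr⟩ (by intro p hp; simp at hp))
  have h1 : pr (Hs (-e1)) (Hs e1) :=
    key _ _ (Hs_mem_class (unit_ne_zero he1)) (Hs_mem_class (unit_ne_zero he1')) hne.symm
  have h2 : pr (Hs e1) (Hs (-e1)) :=
    key _ _ (Hs_mem_class (unit_ne_zero he1')) (Hs_mem_class (unit_ne_zero he1)) hne
  exact spo.asymm h1 h2

/-! ### main theorem -/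

theorem pbtd_homHalfspaces' :
    PBTD (homHalfspaces 1) = 1 ∧ ∀ d : ℕ, 2 ≤ d → PBTD (homHalfspaces d) = 2 := by
  constructor
  · apply le_antisymm
    · exact le_trans (PBTD_le_ord ⟨fun A h => h, fun A B C h _ => h.elim⟩) ord_one_le_one
    · apply le_sInf
      rintro v ⟨pr, spo, rfl⟩
      exact one_le_ord_one pr spo
  · intro d hd
    apply le_antisymm
    · exact le_trans (PBTD_le_ord (prH_strictPO d)) ord_le_two
    · apply le_sInf
      rintro v ⟨pr, spo, rfl⟩
      exact two_le_PBTDord hd pr spo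

/-- `PBTD(𝓗₁⁰) = 1` and `PBTD(𝓗_d⁰) = 2` for every `d ≥ 2`. -/
theorem pbtd_homHalfspaces :
    PBTD (homHalfspaces 1) = 1 ∧ ∀ d : ℕ, 2 ≤ d → PBTD (homHalfspaces d) = 2 :=
  pbtd_homHalfspaces'

end PBT
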